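/- Let P be a partially ordered set and f : ℕ^n → P a map such that (1) f is antitone (a ≤ b implies f(a) ≥ f(b)) and (2) for every strictly increasing chain a₁ < a₂ < ... in ℕ^n, the decreasing chain f(a₁) ≥ f(a₂) ≥ ... is eventually constant. Then there exists a finite subset B of ℕ^n such that for every a ∈ ℕ^n there is b ∈ B with b ≤ a and f(a) = f(b). -/

import Mathlib

private def natWO : IsWellOrder ℕ (· < ·) := inferInstance

private theorem pi_isPWO {n : ℕ} (S : Set (Fin n → ℕ)) : S.IsPWO :=
  Set.isPWO_of_wellQuasiOrderedLE S

theorem finite_basis_lemma {n : ℕ} {P : Type*} [PartialOrder P]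
    (f : (Fin n → ℕ) → P) (hf : Antitone f)
    (hchain : ∀ a : ℕ → (Fin n → ℕ), StrictMono a →
      ∃ N : ℕ, ∀ k ≥ N, f (a k) = f (a N)) :
    ∃ B : Finset (Fin n → ℕ), ∀ a : Fin n → ℕ,
      ∃ b ∈ B, b ≤ a ∧ f a = f b := by
  classical
  set S : Set (Fin n → ℕ) := {a | ∀ b, b < a → f b ≠ f a} with hS
  have hSfin : S.Finite := by
    by_contra hinf
    let g := Set.Infinite.natEmbedding S hinf
    obtain ⟨φ, hφ⟩ := (pi_isPWO S).exists_monotone_subseq (f := fun k => (g k : Fin n → ℕ))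
      (fun k => (g k).2)
    have hinj : Function.Injective (fun k => ((g (φ k) : Fin n → ℕ))) := by
      intro x y hxy
      have := g.injective (Subtype.ext hxy)
      exact φ.injective this
    have hsm : StrictMono (fun k => ((g (φ k) : Fin n → ℕ))) :=
      hφ.strictMono_of_injective hinj
    obtain ⟨N, hN⟩ := hchain _ hsm
    have hlt : ((g (φ N) : Fin n → ℕ)) < ((g (φ (N+1)) : Fin n → ℕ)) :=
      hsm (Nat.lt_succ_self N)
    exact (g (φ (N+1))).2 _ hlt (hN (N+1) (Nat.le_succ N)).symm
  refine ⟨hSfin.toFinset, fun a => ?_⟩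
  have hwf : WellFounded ((· < ·) : (Fin n → ℕ) → (Fin n → ℕ) → Prop) := by
    have := (pi_isPWO (Set.univ : Set (Fin n → ℕ))).isWF
    rw [Set.isWF_univ_iff] at this
    exact this.wf
  obtain ⟨m, ⟨hma, hmf⟩, hmin⟩ := hwf.has_min {b | b ≤ a ∧ f b = f a} ⟨a, le_refl a, rfl⟩
  refine ⟨m, ?_, hma, hmf.symm⟩
  rw [Set.Finite.mem_toFinset]
  intro b hb hfb
  exact hmin b ⟨le_trans hb.le hma, hfb.trans hmf⟩ hb
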